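/- Let n ≥ 1, let L : ℝ → Matrix(n, n, ℝ) be differentiable and P : ℝ → Matrix(n, n, ℝ) be arbitrary, and suppose the Lax equation L'(t) = P(t)·L(t) − L(t)·P(t) holds for all t. Then for every natural number k, the function t ↦ trace(L(t)^k) is constant on ℝ. -/

import Mathlib

/-- If `L : ℝ → Matrix (Fin n) (Fin n) ℝ` is differentiable and satisfies the
Lax equation `L'(t) = P(t)·L(t) − L(t)·P(t)`, then all spectral invariants
`t ↦ trace(L(t)^k)` are constant. -/
theorem stmt_6 (n : ℕ) (hn : 1 ≤ n)
    (L P : ℝ → Matrix (Fin n) (Fin n) ℝ)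
    (hLdiff : ∀ i j : Fin n, Differentiable ℝ (fun t => L t i j))
    (hLax : ∀ (t : ℝ) (i j : Fin n),
      deriv (fun s => L s i j) t = (P t * L t - L t * P t) i j) :
    ∀ k : ℕ, ∀ t₁ t₂ : ℝ, Matrix.trace (L t₁ ^ k) = Matrix.trace (L t₂ ^ k) := by
  -- entrywise derivative of L
  have hL : ∀ (t : ℝ) (i j : Fin n),
      HasDerivAt (fun s => L s i j) ((P t * L t - L t * P t) i j) t := by
    intro t i j
    have := ((hLdiff i j) t).hasDerivAt
    rwa [hLax t i j] at this
  -- entrywise derivative of L^k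
  have hpow : ∀ (k : ℕ) (t : ℝ) (i j : Fin n),
      HasDerivAt (fun s => (L s ^ k) i j)
        ((P t * L t ^ k - L t ^ k * P t) i j) t := by
    intro k
    induction k with
    | zero =>
      intro t i j
      simp only [pow_zero, mul_one, one_mul, sub_self, Matrix.zero_apply]
      exact hasDerivAt_const t _
    | succ k ih =>
      intro t i j
      have h1 : ∀ s : ℝ, (L s ^ (k + 1)) i j = ∑ m, (L s ^ k) i m * L s m j := by
        intro s; rw [pow_succ, Matrix.mul_apply]
      have h2 : HasDerivAt (fun s => ∑ m, (L s ^ k) i m * L s m j)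
          (∑ m, ((P t * L t ^ k - L t ^ k * P t) i m * L t m j
            + (L t ^ k) i m * (P t * L t - L t * P t) m j)) t :=
        HasDerivAt.fun_sum fun m _ => (ih t i m).mul (hL t m j)
      have h3 : (∑ m, ((P t * L t ^ k - L t ^ k * P t) i m * L t m j
            + (L t ^ k) i m * (P t * L t - L t * P t) m j))
          = (P t * L t ^ (k + 1) - L t ^ (k + 1) * P t) i j := by
        have hm : (P t * L t ^ k - L t ^ k * P t) * L t
            + L t ^ k * (P t * L t - L t * P t)
            = P t * L t ^ (k + 1) - L t ^ (k + 1) * P t := by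
          noncomm_ring
        calc (∑ m, ((P t * L t ^ k - L t ^ k * P t) i m * L t m j
              + (L t ^ k) i m * (P t * L t - L t * P t) m j))
            = ((P t * L t ^ k - L t ^ k * P t) * L t
              + L t ^ k * (P t * L t - L t * P t)) i j := by
              rw [Matrix.add_apply, Matrix.mul_apply, Matrix.mul_apply,
                ← Finset.sum_add_distrib]
          _ = (P t * L t ^ (k + 1) - L t ^ (k + 1) * P t) i j := by rw [hm]
      rw [← h3]
      exact h2.congr_deriv rfl |>.congr_of_eventuallyEq (by
        filter_upwards with s using (h1 s))
  -- derivative of the trace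
  have htr : ∀ (k : ℕ) (t : ℝ),
      HasDerivAt (fun s => Matrix.trace (L s ^ k)) 0 t := by
    intro k t
    have h : HasDerivAt (fun s => ∑ i, (L s ^ k) i i)
        (∑ i, (P t * L t ^ k - L t ^ k * P t) i i) t :=
      HasDerivAt.fun_sum fun i _ => hpow k t i i
    have h0 : (∑ i, (P t * L t ^ k - L t ^ k * P t) i i) = 0 := by
      have : Matrix.trace (P t * L t ^ k - L t ^ k * P t) = 0 := by
        rw [Matrix.trace_sub, Matrix.trace_mul_comm, sub_self]
      simpa [Matrix.trace, Matrix.diag] using this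
    rw [h0] at h
    exact h.congr_of_eventuallyEq (by
      filter_upwards with s
      simp [Matrix.trace, Matrix.diag])
  intro k t₁ t₂
  exact is_const_of_deriv_eq_zero (fun t => (htr k t).differentiableAt)
    (fun t => (htr k t).deriv) t₁ t₂
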